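/- Let c₀, c₁, c₂ be real numbers with c₂ < 0, and consider the cubic polynomial p(λ) = λ³ − c₂λ² + c₁λ − c₀ over ℂ. Then the multiset of three complex roots of p consists of two roots with negative real part and one root that is real and positive if and only if c₀ > 0. -/

import Mathlib

open Polynomial

private lemma roots_factored (z₁ z₂ z₃ : ℂ) :
    ((X - C z₁) * (X - C z₂) * (X - C z₃)).roots = {z₁, z₂, z₃} := by
  rw [roots_mul (mul_ne_zero (mul_ne_zero (X_sub_C_ne_zero z₁) (X_sub_C_ne_zero z₂)) (X_sub_C_ne_zero z₃)),
      roots_mul (mul_ne_zero (X_sub_C_ne_zero z₁) (X_sub_C_ne_zero z₂)), roots_X_sub_C, roots_X_sub_C, roots_X_sub_C]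
  rfl

private lemma key_roots (c₀ c₁ c₂ r : ℝ) (hrc : r * (r^2 - c₂*r + c₁) = c₀)
    (z₁ z₂ : ℂ) (hsum : z₁ + z₂ = ((-(r - c₂) : ℝ) : ℂ))
    (hprod : z₁ * z₂ = ((r^2 - c₂*r + c₁ : ℝ) : ℂ)) :
    (X ^ 3 - C (c₂ : ℂ) * X ^ 2 + C (c₁ : ℂ) * X - C (c₀ : ℂ)).roots = {z₁, z₂, (r : ℂ)} := by
  have hrc' : (r : ℂ) * ((r:ℂ)^2 - c₂*r + c₁) = (c₀ : ℂ) := by exact_mod_cast hrc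
  push_cast at hsum hprod
  have e1 : ((c₂ : ℝ) : ℂ) = z₁ + z₂ + (r : ℂ) := by linear_combination -hsum
  have e2 : ((c₁ : ℝ) : ℂ) = z₁*z₂ + z₁*(r:ℂ) + z₂*(r:ℂ) := by
    linear_combination -hprod - (r : ℂ) * hsum
  have e3 : ((c₀ : ℝ) : ℂ) = z₁*z₂*(r:ℂ) := by
    linear_combination -(r : ℂ) * hprod - hrc'
  have hP : X ^ 3 - C (c₂ : ℂ) * X ^ 2 + C (c₁ : ℂ) * X - C (c₀ : ℂ)
      = (X - C z₁) * (X - C z₂) * (X - C (r:ℂ)) := by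
    rw [e1, e2, e3]
    simp only [map_add, map_mul]
    ring
  rw [hP, roots_factored]

theorem cubic_two_negative_one_real_positive_iff
    (c₀ c₁ c₂ : ℝ) (hc₂ : c₂ < 0) :
    (∃ z₁ z₂ z₃ : ℂ,
        (X ^ 3 - C (c₂ : ℂ) * X ^ 2 + C (c₁ : ℂ) * X - C (c₀ : ℂ)).roots
          = {z₁, z₂, z₃} ∧
        z₁.re < 0 ∧ z₂.re < 0 ∧ z₃.im = 0 ∧ 0 < z₃.re) ↔ 0 < c₀ := by
  constructor
  · rintro ⟨z₁, z₂, z₃, hroots, h1, h2, h3im, h3re⟩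
    set P : ℂ[X] := X ^ 3 - C (c₂ : ℂ) * X ^ 2 + C (c₁ : ℂ) * X - C (c₀ : ℂ) with hPdef
    have hmonic : P.Monic := by rw [hPdef]; monicity!
    have hP0 : P ≠ 0 := hmonic.ne_zero
    have hfac : P = (X - C z₁) * ((X - C z₂) * (X - C z₃)) := by
      have h := (IsAlgClosed.splits P).eq_prod_roots_of_monic hmonic
      rw [hroots] at h
      simpa [Multiset.map_cons, Multiset.prod_cons, mul_assoc] using h
    have hprod3 : ((c₀ : ℝ) : ℂ) = z₁ * z₂ * z₃ := by
      have h := congrArg (Polynomial.eval 0) hfac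
      simp [hPdef] at h
      linear_combination h
    -- conjugation fixes the root set
    have hconj : ∀ z : ℂ, z ∈ P.roots → (starRingEnd ℂ) z ∈ P.roots := by
      intro z hz
      rw [mem_roots hP0] at hz ⊢
      have : P.eval ((starRingEnd ℂ) z) = (starRingEnd ℂ) (P.eval z) := by
        simp [hPdef, Complex.conj_ofReal]
      rw [IsRoot, this, hz, map_zero]
    have hz3conj : (starRingEnd ℂ) z₃ = z₃ := Complex.conj_eq_iff_im.mpr h3im
    have hz1ne : z₁ ≠ 0 := by intro h; rw [h] at h1; simp at h1
    -- establish z₁ * z₂ is a positive real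
    have hw : (z₁ * z₂).im = 0 ∧ 0 < (z₁ * z₂).re := by
      have hm1 : (starRingEnd ℂ) z₁ ∈ P.roots := hconj z₁ (by rw [hroots]; simp)
      rw [hroots] at hm1
      simp only [Multiset.insert_eq_cons, Multiset.mem_cons, Multiset.mem_singleton] at hm1
      rcases hm1 with h11 | h12 | h13
      · -- z₁ is real
        have him1 : z₁.im = 0 := Complex.conj_eq_iff_im.mp h11
        have hm2 : (starRingEnd ℂ) z₂ ∈ P.roots := hconj z₂ (by rw [hroots]; simp)
        rw [hroots] at hm2
        simp only [Multiset.insert_eq_cons, Multiset.mem_cons, Multiset.mem_singleton] at hm2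
        have him2 : z₂.im = 0 := by
          rcases hm2 with h21 | h22 | h23
          · have := congrArg Complex.im h21
            simp only [Complex.conj_im] at this
            linarith [him1]
          · exact Complex.conj_eq_iff_im.mp h22
          · have : z₂ = z₃ := by
              have h' : z₂ = (starRingEnd ℂ) z₃ := by rw [← h23]; simp
              rw [h', hz3conj]
            exfalso; rw [this] at h2; linarith
        constructor
        · simp [Complex.mul_im, him1, him2]
        · rw [Complex.mul_re, him1, him2]
          nlinarith
      · -- z₂ = conj z₁
        rw [← h12, Complex.mul_conj]
        constructor
        · simp
        · simpa using Complex.normSq_pos.mpr hz1ne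
      · exfalso
        have : z₁ = z₃ := by
          have : z₁ = (starRingEnd ℂ) z₃ := by rw [← h13]; simp
          rw [this, hz3conj]
        rw [this] at h1; linarith
    have hre := congrArg Complex.re hprod3
    rw [Complex.ofReal_re, Complex.mul_re, hw.1] at hre
    nlinarith [hw.2, h3re]
  · intro hc₀
    -- find positive real root by IVT
    set f : ℝ → ℝ := fun x => x^3 - c₂*x^2 + c₁*x - c₀ with hfdef
    set M : ℝ := 1 + |c₂| + |c₁| + |c₀| with hMdef
    have hM1 : 1 ≤ M := by
      have := abs_nonneg c₂; have := abs_nonneg c₁; have := abs_nonneg c₀; linarith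
    have hfM : 0 < f M := by
      have h2 := le_abs_self c₂; have h2' := neg_abs_le c₂
      have h1 := le_abs_self c₁; have h1' := neg_abs_le c₁
      have h0 := le_abs_self c₀; have h0' := neg_abs_le c₀
      have hMpos : 0 < M := by linarith
      simp only [hfdef]
      nlinarith [sq_nonneg M, mul_pos hMpos hMpos]
    have hf0 : f 0 < 0 := by simp [hfdef]; linarith
    have hcont : ContinuousOn f (Set.Icc 0 M) := by fun_prop
    have hivt := intermediate_value_Ioo (by linarith : (0:ℝ) ≤ M) hcont
    have h0mem : (0:ℝ) ∈ Set.Ioo (f 0) (f M) := ⟨hf0, hfM⟩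
    obtain ⟨r, hrmem, hfr⟩ := hivt h0mem
    have hr : 0 < r := hrmem.1
    have hfr' : r^3 - c₂*r^2 + c₁*r - c₀ = 0 := hfr
    set c : ℝ := r^2 - c₂*r + c₁ with hcdef
    set b : ℝ := r - c₂ with hbdef
    have hrc : r * c = c₀ := by rw [hcdef]; nlinarith [hfr']
    have hb : 0 < b := by rw [hbdef]; linarith
    have hc : 0 < c := by nlinarith [hrc, hr, hc₀]
    by_cases hdisc : 0 ≤ b^2 - 4*c
    · set s : ℝ := Real.sqrt (b^2 - 4*c) with hsdef
      have hs0 : 0 ≤ s := Real.sqrt_nonneg _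
      have hs2 : s^2 = b^2 - 4*c := Real.sq_sqrt hdisc
      have hsb : s < b := by
        have : s^2 < b^2 := by rw [hs2]; linarith
        nlinarith
      refine ⟨(((-b - s)/2 : ℝ) : ℂ), (((-b + s)/2 : ℝ) : ℂ), (r : ℂ), ?_, ?_, ?_, ?_, ?_⟩
      · apply key_roots c₀ c₁ c₂ r (by rw [← hcdef]; exact hrc)
        · push_cast; rw [hbdef]; push_cast; ring
        · have hR : ((-b - s)/2) * ((-b + s)/2) = c := by nlinarith [hs2]
          exact_mod_cast hR
      · simp only [Complex.ofReal_re]; linarith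
      · simp only [Complex.ofReal_re]; linarith
      · simp
      · simpa using hr
    · push_neg at hdisc
      set t : ℝ := Real.sqrt (4*c - b^2) with htdef
      have ht2 : t^2 = 4*c - b^2 := Real.sq_sqrt (by linarith)
      refine ⟨(↑(-b/2) : ℂ) + (↑(t/2) : ℂ) * Complex.I,
              (↑(-b/2) : ℂ) - (↑(t/2) : ℂ) * Complex.I, (r : ℂ), ?_, ?_, ?_, ?_, ?_⟩
      · apply key_roots c₀ c₁ c₂ r (by rw [← hcdef]; exact hrc)
        · push_cast; rw [hbdef]; push_cast; ring
        · have htC : ((t:ℂ))^2 = 4*(c:ℂ) - (b:ℂ)^2 := by exact_mod_cast ht2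
          have hcC : ((c:ℝ) : ℂ) = (r:ℂ)^2 - (c₂:ℂ)*(r:ℂ) + (c₁:ℂ) := by exact_mod_cast congrArg (fun x : ℝ => (x : ℂ)) hcdef
          push_cast
          linear_combination ((1:ℂ)/4) * htC + (-(t:ℂ)^2/4) * Complex.I_sq + hcC
      · simp [Complex.add_re]; linarith
      · simp [Complex.sub_re]; linarith
      · simp
      · simpa using hr
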